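/- Let A → B be a ring homomorphism with B finitely generated projective as an A-module and Hom_A(B, A) projective as a B-module. If L is a flat A-module, then Hom_A(B, L) is a flat B-module. -/

import Mathlib

/-- Flatness of a left module over a possibly noncommutative ring, via Lambek's criterion:
`M` is flat over `R` iff its character module `Hom_ℤ(M, ℚ/ℤ)` is injective as a right
`R`-module (this is equivalent to exactness of `(-) ⊗_R M`). -/
def IsFlat (R M : Type) [Ring R] [AddCommGroup M] [Module R M] : Prop :=
  Module.Injective Rᵈᵐᵃ (M →+ AddCircle (1 : ℚ))

/-- `flatDimLE R d M` : the flat dimension of `M` over `R` is at most `d`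
(there is a flat resolution of length `≤ d`). -/
def flatDimLE (R : Type) [Ring R] : ℕ → ModuleCat.{0} R → Prop
  | 0, M => IsFlat R M
  | d+1, M => ∃ (F : ModuleCat.{0} R) (g : F →ₗ[R] M),
      IsFlat R F ∧ Function.Surjective g ∧
        flatDimLE R d (ModuleCat.of R (LinearMap.ker g))

/-- Flat dimension at most `d`, for a bare module. -/
def FlatDimLE (R M : Type) [Ring R] [AddCommGroup M] [Module R M] (d : ℕ) : Prop :=
  flatDimLE R d (ModuleCat.of R M)

/-- `projDimLE R d M` : the projective dimension of `M` over `R` is at most `d`. -/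
def projDimLE (R : Type) [Ring R] : ℕ → ModuleCat.{0} R → Prop
  | 0, M => Module.Projective R M
  | d+1, M => ∃ (F : ModuleCat.{0} R) (g : F →ₗ[R] M),
      Module.Projective R F ∧ Function.Surjective g ∧
        projDimLE R d (ModuleCat.of R (LinearMap.ker g))

/-- `R` has finite (left) global dimension: there is a uniform bound on the projective
dimension of all `R`-modules. -/
def HasFiniteGlobalDim (R : Type) [Ring R] : Prop :=
  ∃ g : ℕ, ∀ M : ModuleCat.{0} R, projDimLE R g M

set_option linter.unusedSectionVars false

namespace StmtAux

open Finsupp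

variable {B : Type} [Ring B] {P : Type} [AddCommGroup P] [Module B P]
variable (s : P →ₗ[B] (P →₀ B))
variable {X : Type} [AddCommGroup X] [Module Bᵈᵐᵃ X]

lemma mk_zero_smul (x : X) : DomMulAct.mk (0 : B) • x = 0 := by
  rw [show DomMulAct.mk (0 : B) = (0 : Bᵈᵐᵃ) from rfl, zero_smul]

lemma mk_add_smul (c c' : B) (x : X) :
    DomMulAct.mk (c + c') • x = DomMulAct.mk c • x + DomMulAct.mk c' • x := by
  rw [show DomMulAct.mk (c + c') = DomMulAct.mk c + DomMulAct.mk c' from rfl, add_smul]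

lemma mk_mul_smul (c c' : B) (x : X) :
    DomMulAct.mk (c * c') • x = DomMulAct.mk c' • (DomMulAct.mk c • x) := by
  rw [DomMulAct.mk_mul, mul_smul]

/-- The image of the "elementary tensor" `x ⊗ p` in `X^{(P)}`, via the section `s`. -/
noncomputable def iot (x : X) (p : P) : P →₀ X :=
  (s p).sum fun q c => Finsupp.single q (DomMulAct.mk c • x)

lemma iot_zero_x (p : P) : iot s (0 : X) p = 0 := by
  simp [iot]

lemma iot_add_x (x x' : X) (p : P) : iot s (x + x') p = iot s x p + iot s x' p := by
  simp [iot, smul_add, Finsupp.single_add, Finsupp.sum_add]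

/-- `iot` as an `AddMonoidHom` in `x`. -/
noncomputable def iotHom (p : P) : X →+ (P →₀ X) where
  toFun := fun x => iot s x p
  map_zero' := iot_zero_x s p
  map_add' := fun x x' => iot_add_x s x x' p

lemma iot_zero_p (x : X) : iot s x 0 = 0 := by simp [iot]

lemma iot_add_p (x : X) (p p' : P) : iot s x (p + p') = iot s x p + iot s x p' := by
  unfold iot
  rw [map_add]
  exact Finsupp.sum_add_index' (fun q => by rw [mk_zero_smul, Finsupp.single_zero])
    (fun q c c' => by rw [mk_add_smul, Finsupp.single_add])

lemma iot_smul_b (b : B) (x : X) (p : P) :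
    iot s x (b • p) = iot s (DomMulAct.mk b • x) p := by
  unfold iot
  rw [map_smul, Finsupp.sum_smul_index' (fun q => by rw [mk_zero_smul, Finsupp.single_zero])]
  exact Finsupp.sum_congr fun q _ => by rw [smul_eq_mul, mk_mul_smul]

/-- The idempotent `X^{(P)} → X^{(P)}` whose image is `X ⊗_B P`. -/
noncomputable def ehat : (P →₀ X) →+ (P →₀ X) :=
  Finsupp.liftAddHom (iotHom s)

lemma ehat_single (p : P) (x : X) : ehat s (Finsupp.single p x) = iot s x p :=
  Finsupp.liftAddHom_apply_single _ _ _

lemma ehat_apply (u : P →₀ X) : ehat s u = u.sum fun p x => iot s x p :=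
  Finsupp.liftAddHom_apply _ _

lemma sum_iot_lin (x : X) (e : P →ₗ[B] P) (v : P →₀ B) :
    (v.sum fun q c => iot s (DomMulAct.mk c • x) (e q))
      = iot s x (e (Finsupp.linearCombination B id v)) := by
  induction v using Finsupp.induction_linear with
  | zero => simp [iot_zero_p]
  | add u w hu hw =>
      rw [Finsupp.sum_add_index' (fun q => by rw [mk_zero_smul, iot_zero_x])
        (fun q c c' => by rw [mk_add_smul, iot_add_x]), hu, hw, map_add, map_add, iot_add_p]
  | single q c =>
      rw [Finsupp.sum_single_index (by rw [mk_zero_smul, iot_zero_x]),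
        Finsupp.linearCombination_single, id_eq, map_smul, iot_smul_b]

lemma ehat_iot (hs : Function.LeftInverse (Finsupp.linearCombination B id) s)
    (x : X) (p : P) : ehat s (iot s x p) = iot s x p := by
  have h1 : ehat s (iot s x p)
      = (s p).sum fun q c => iot s (DomMulAct.mk c • x) q := by
    unfold iot
    rw [map_finsuppSum]
    exact Finsupp.sum_congr fun q _ => ehat_single s q _
  have h2 := sum_iot_lin s x (LinearMap.id (R := B) (M := P)) (s p)
  rw [h1]
  simpa [hs p] using h2

variable {A' : Type} [Ring A'] [Module A' P] [SMulCommClass A' B P]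

/-- Scalar action of `A'` on `P` as a `B`-linear map. -/
noncomputable def aLin (a : A') : P →ₗ[B] P where
  toFun := fun p => a • p
  map_add' := fun p p' => smul_add a p p'
  map_smul' := fun b p => smul_comm a b p

/-- The action of `a : A'` on `X ⊗_B P` realized on `X^{(P)}`. -/
noncomputable def aActHom (a : A') : (P →₀ X) →+ (P →₀ X) :=
  Finsupp.liftAddHom fun p => iotHom s (a • p)

lemma aAct_single (a : A') (p : P) (x : X) :
    aActHom s a (Finsupp.single p x) = iot s x (a • p) :=
  Finsupp.liftAddHom_apply_single _ _ _

lemma aAct_apply (a : A') (u : P →₀ X) :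
    aActHom s a u = u.sum fun p x => iot s x (a • p) :=
  Finsupp.liftAddHom_apply _ _

lemma aAct_iot (hs : Function.LeftInverse (Finsupp.linearCombination B id) s)
    (a : A') (x : X) (p : P) : aActHom s a (iot s x p) = iot s x (a • p) := by
  have h1 : aActHom s a (iot s x p)
      = (s p).sum fun q c => iot s (DomMulAct.mk c • x) (aLin (B := B) (P := P) a q) := by
    unfold iot
    rw [map_finsuppSum]
    exact Finsupp.sum_congr fun q _ => aAct_single s a q _
  have h2 := sum_iot_lin s x (aLin (B := B) (P := P) a) (s p)
  rw [h1, h2]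
  show iot s x (a • (Finsupp.linearCombination B id (s p))) = _
  rw [hs p]

/-- The subgroup of `X^{(P)}` which is the image of the idempotent `ehat`;
this is a model for `X ⊗_B P`. -/
noncomputable def Tsub : AddSubgroup (P →₀ X) where
  carrier := {u | ehat s u = u}
  zero_mem' := map_zero _
  add_mem' := fun {a b} ha hb => by
    simp only [Set.mem_setOf_eq] at *
    rw [map_add, ha, hb]
  neg_mem' := fun {a} ha => by
    simp only [Set.mem_setOf_eq] at *
    rw [map_neg, ha]

lemma aAct_mem (hs : Function.LeftInverse (Finsupp.linearCombination B id) s)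
    (a : A') (u : P →₀ X) : aActHom s a u ∈ Tsub s (X := X) := by
  show ehat s (aActHom s a u) = aActHom s a u
  rw [aAct_apply, map_finsuppSum]
  exact Finsupp.sum_congr fun p _ => ehat_iot s hs _ _

lemma iot_mem (hs : Function.LeftInverse (Finsupp.linearCombination B id) s)
    (x : X) (p : P) : iot s x p ∈ Tsub s (X := X) :=
  ehat_iot s hs x p

/-- The `A'`-module structure on the model of `X ⊗_B P`. -/
noncomputable def tmod (hs : Function.LeftInverse (Finsupp.linearCombination B id) s) :
    Module A' ↥(Tsub s (X := X)) :=
  { smul := fun a u => ⟨aActHom s a u.1, aAct_mem s hs a u.1⟩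
    one_smul := fun u => Subtype.ext <| by
      show aActHom s (1 : A') u.1 = u.1
      rw [aAct_apply]
      simp only [one_smul]
      rw [← ehat_apply, u.2]
    mul_smul := fun a b u => Subtype.ext <| by
      show aActHom s (a * b) u.1 = aActHom s a (aActHom s b u.1)
      rw [aAct_apply s b u.1, map_finsuppSum, aAct_apply s (a * b) u.1]
      exact Finsupp.sum_congr fun p _ => by rw [aAct_iot s hs, mul_smul]
    smul_zero := fun a => Subtype.ext <| map_zero (aActHom s a)
    smul_add := fun a u v => Subtype.ext <| map_add (aActHom s a) u.1 v.1
    add_smul := fun a b u => Subtype.ext <| by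
      show aActHom s (a + b) u.1 = aActHom s a u.1 + aActHom s b u.1
      rw [aAct_apply, aAct_apply, aAct_apply, ← Finsupp.sum_add]
      exact Finsupp.sum_congr fun p _ => by rw [add_smul, iot_add_p]
    zero_smul := fun u => Subtype.ext <| by
      show aActHom s (0 : A') u.1 = 0
      rw [aAct_apply]
      simp [iot_zero_p] }

end StmtAux

section Injectivity

open Finsupp StmtAux

theorem StmtAux.injective_hom {B : Type} [Ring B] {P : Type} [AddCommGroup P] [Module B P]
    {A' : Type} [Ring A'] [Module A' P] [SMulCommClass A' B P]
    {D : Type} [AddCommGroup D] [Module A' D]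
    (hP : Module.Projective B P) (hD : Module.Injective A' D) :
    Module.Injective Bᵈᵐᵃ (P →ₗ[A'] D) := by
  obtain ⟨s, hs⟩ := hP.out
  refine ⟨fun X Y _ _ _ _ f hf g => ?_⟩
  letI mX : Module A' ↥(Tsub s (X := X)) := tmod s hs
  letI mY : Module A' ↥(Tsub s (X := Y)) := tmod s hs
  -- the map induced by `f` on `X^{(P)}`
  let F : (P →₀ X) →+ (P →₀ Y) := Finsupp.mapRange.addMonoidHom f.toAddMonoidHom
  have F_single : ∀ (p : P) (x : X), F (Finsupp.single p x) = Finsupp.single p (f x) := by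
    intro p x
    simp [F]
  have F_iot : ∀ (x : X) (p : P), F (iot s x p) = iot s (f x) p := by
    intro x p
    unfold iot
    rw [map_finsuppSum]
    exact Finsupp.sum_congr fun q _ => by rw [F_single, map_smul]
  have F_mem : ∀ u ∈ Tsub s (X := X), F u ∈ Tsub s (X := Y) := by
    have comm : ∀ v : P →₀ X, ehat s (F v) = F (ehat s v) := by
      intro v
      induction v using Finsupp.induction_linear with
      | zero => simp
      | add v w hv hw => rw [map_add, map_add, hv, hw, map_add, map_add]
      | single p x => rw [F_single, ehat_single, ehat_single, F_iot]
    intro u hu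
    show ehat s (F u) = F u
    rw [comm, show ehat s u = u from hu]
  have F_aAct : ∀ (a : A') (v : P →₀ X), F (aActHom s a v) = aActHom s a (F v) := by
    intro a v
    induction v using Finsupp.induction_linear with
    | zero => simp
    | add v w hv hw => rw [map_add, map_add, hv, hw, map_add, map_add]
    | single p x => rw [aAct_single, F_iot, F_single, aAct_single]
  let j : ↥(Tsub s (X := X)) →ₗ[A'] ↥(Tsub s (X := Y)) :=
    { toFun := fun u => ⟨F u.1, F_mem u.1 u.2⟩
      map_add' := fun u v => Subtype.ext (map_add F u.1 v.1)
      map_smul' := fun a u => Subtype.ext (F_aAct a u.1) }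
  have jinj : Function.Injective j := by
    intro u v huv
    apply Subtype.ext
    have h1 : F u.1 = F v.1 := congrArg Subtype.val huv
    ext p
    have h2 := congrArg (fun w => w p) h1
    simpa only [F, Finsupp.mapRange.addMonoidHom_apply, Finsupp.mapRange_apply] using hf h2
  -- the adjoint of g
  let GhatHom : (P →₀ X) →+ D := Finsupp.liftAddHom fun p =>
    { toFun := fun x => g x p
      map_zero' := by simp
      map_add' := fun x x' => by simp }
  have Ghat_single : ∀ (p : P) (x : X), GhatHom (Finsupp.single p x) = g x p := by
    intro p x
    exact Finsupp.liftAddHom_apply_single _ _ _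
  have Ghat_apply : ∀ u : P →₀ X, GhatHom u = u.sum fun p x => g x p := by
    intro u
    exact Finsupp.liftAddHom_apply _ _
  have Ghat_iot : ∀ (x : X) (p : P), GhatHom (iot s x p) = g x p := by
    intro x p
    have h1 : GhatHom (iot s x p) = (s p).sum fun q c => g x (c • q) := by
      unfold iot
      rw [map_finsuppSum]
      refine Finsupp.sum_congr fun q _ => ?_
      rw [Ghat_single, map_smul]
      rfl
    have h2 : g x (Finsupp.linearCombination B id (s p)) = (s p).sum fun q c => g x (c • q) := by
      rw [Finsupp.linearCombination_apply, map_finsuppSum]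
      simp
    rw [h1, ← h2, hs p]
  let Ghat : ↥(Tsub s (X := X)) →ₗ[A'] D :=
    { toFun := fun u => GhatHom u.1
      map_add' := fun u v => map_add _ u.1 v.1
      map_smul' := fun a u => by
        show GhatHom (aActHom s a u.1) = a • GhatHom u.1
        rw [aAct_apply, map_finsuppSum,
          show (fun p (x : X) => GhatHom (iot s x (a • p))) = fun p x => a • g x p from
            funext fun p => funext fun x => by rw [Ghat_iot, map_smul],
          ← Finsupp.smul_sum, ← Ghat_apply] }
  obtain ⟨H, hH⟩ := hD.out j jinj Ghat
  have key_add_p : ∀ (y : Y) (p p' : P),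
      (⟨iot s y (p + p'), iot_mem s hs y (p + p')⟩ : ↥(Tsub s (X := Y)))
        = ⟨iot s y p, iot_mem s hs y p⟩ + ⟨iot s y p', iot_mem s hs y p'⟩ :=
    fun y p p' => Subtype.ext (iot_add_p s y p p')
  have key_smul_a : ∀ (a : A') (y : Y) (p : P),
      (⟨iot s y (a • p), iot_mem s hs y (a • p)⟩ : ↥(Tsub s (X := Y)))
        = a • (⟨iot s y p, iot_mem s hs y p⟩ : ↥(Tsub s (X := Y))) :=
    fun a y p => Subtype.ext (aAct_iot s hs a y p).symm
  have key_add_y : ∀ (y y' : Y) (p : P),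
      (⟨iot s (y + y') p, iot_mem s hs (y + y') p⟩ : ↥(Tsub s (X := Y)))
        = ⟨iot s y p, iot_mem s hs y p⟩ + ⟨iot s y' p, iot_mem s hs y' p⟩ :=
    fun y y' p => Subtype.ext (iot_add_x s y y' p)
  have key_smul_b : ∀ (b : B) (y : Y) (p : P),
      (⟨iot s (DomMulAct.mk b • y) p, iot_mem s hs (DomMulAct.mk b • y) p⟩ : ↥(Tsub s (X := Y)))
        = ⟨iot s y (b • p), iot_mem s hs y (b • p)⟩ :=
    fun b y p => Subtype.ext (iot_smul_b s b y p).symm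
  have key_j : ∀ (x : X) (p : P),
      (⟨iot s (f x) p, iot_mem s hs (f x) p⟩ : ↥(Tsub s (X := Y)))
        = j ⟨iot s x p, iot_mem s hs x p⟩ :=
    fun x p => Subtype.ext (F_iot x p).symm
  let hmap : Y → (P →ₗ[A'] D) := fun y =>
    { toFun := fun p => H ⟨iot s y p, iot_mem s hs y p⟩
      map_add' := fun p p' => by
        show H ⟨iot s y (p + p'), iot_mem s hs y (p + p')⟩
          = H ⟨iot s y p, iot_mem s hs y p⟩ + H ⟨iot s y p', iot_mem s hs y p'⟩
        rw [key_add_p, map_add]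
      map_smul' := fun a p => by
        show H ⟨iot s y (a • p), iot_mem s hs y (a • p)⟩
          = a • H ⟨iot s y p, iot_mem s hs y p⟩
        rw [key_smul_a, map_smul] }
  have hmap_apply : ∀ (y : Y) (p : P), hmap y p = H ⟨iot s y p, iot_mem s hs y p⟩ :=
    fun y p => rfl
  refine ⟨{ toFun := hmap
            map_add' := fun y y' => LinearMap.ext fun p => by
              rw [LinearMap.add_apply, hmap_apply, hmap_apply, hmap_apply, key_add_y, map_add]
            map_smul' := fun bd y => LinearMap.ext fun p => by
              obtain ⟨b, rfl⟩ : ∃ b, DomMulAct.mk b = bd :=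
                ⟨DomMulAct.mk.symm bd, Equiv.apply_symm_apply _ _⟩
              rw [RingHom.id_apply, DomMulAct.mk_smul_linearMap_apply, hmap_apply, hmap_apply,
                key_smul_b] },
    fun x => LinearMap.ext fun p => ?_⟩
  show hmap (f x) p = g x p
  rw [hmap_apply, key_j, hH]
  exact Ghat_iot x p

end Injectivity

theorem StmtAux.injective_of_retract {R : Type} [Ring R] {C C' : Type}
    [AddCommGroup C] [AddCommGroup C'] [Module R C] [Module R C']
    (hC' : Module.Injective R C') (ii : C →ₗ[R] C') (rr : C' →ₗ[R] C)
    (hri : ∀ c, rr (ii c) = c) : Module.Injective R C := by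
  refine ⟨fun X Y _ _ _ _ f hf g => ?_⟩
  obtain ⟨h, hh⟩ := hC'.out f hf (ii.comp g)
  exact ⟨rr.comp h, fun x => by
    rw [LinearMap.comp_apply, hh x, LinearMap.comp_apply, hri]⟩

instance StmtAux.dmaNonAssocSemiring {R : Type*} [Semiring R] : NonAssocSemiring Rᵈᵐᵃ :=
  Semiring.toNonAssocSemiring

instance StmtAux.dmaSemiring {R : Type*} [Ring R] : Semiring Rᵈᵐᵃ :=
  Ring.toSemiring

set_option maxHeartbeats 2000000 in
theorem stmt3' (A B : Type) [Ring A] [Ring B] (f : A →+* B)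
    [Module A B] (hAB : ∀ (a : A) (b : B), a • b = f a * b)
    (hfin : Module.Finite A B) (hproj : Module.Projective A B)
    [Module B (B →ₗ[A] A)]
    (hdual : ∀ (b : B) (h : B →ₗ[A] A) (x : B), (b • h) x = h (x * b))
    (hdualproj : Module.Projective B (B →ₗ[A] A))
    (L : Type) [AddCommGroup L] [Module A L]
    (hL : Module.Injective Aᵈᵐᵃ (L →+ AddCircle (1 : ℚ)))
    [Module B (B →ₗ[A] L)]
    (hdualL : ∀ (b : B) (h : B →ₗ[A] L) (x : B), (b • h) x = h (x * b)) :
    Module.Injective Bᵈᵐᵃ ((B →ₗ[A] L) →+ AddCircle (1 : ℚ)) := by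
  classical
  -- ### dual basis of B over A
  obtain ⟨S, hS⟩ := hfin.fg_top
  let κ : (↥S →₀ A) →ₗ[A] B := Finsupp.linearCombination A (fun i : ↥S => (i : B))
  have hκ : Function.Surjective κ := by
    rw [← LinearMap.range_eq_top, Finsupp.range_linearCombination]
    rw [show Set.range (fun i : ↥S => (i : B)) = (S : Set B) from Subtype.range_coe, hS]
  obtain ⟨σ, hσ⟩ := Module.projective_lifting_property κ LinearMap.id hκ
  let φ : ↥S → (B →ₗ[A] A) := fun i => (Finsupp.lapply i).comp σ
  have hφ : ∀ (i : ↥S) (x : B), φ i x = σ x i := fun i x => rfl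
  have hdb : ∀ x : B, (∑ i : ↥S, φ i x • (i : B)) = x := by
    intro x
    have h1 : κ (σ x) = x := by
      rw [← LinearMap.comp_apply, hσ, LinearMap.id_apply]
    have h2 : (σ x).sum (fun i a => a • (i : B)) = ∑ i : ↥S, (σ x) i • (i : B) :=
      Finsupp.sum_fintype _ _ (fun i => zero_smul A _)
    conv_rhs => rw [← h1]
    rw [show κ (σ x) = (σ x).sum fun i a => a • (i : B) from Finsupp.linearCombination_apply _ _,
      h2]
    exact Finset.sum_congr rfl fun i _ => rfl
  -- ### right A-module structure on B →ₗ[A] A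
  letI rsmul : SMul Aᵈᵐᵃ (B →ₗ[A] A) := ⟨fun a ψ =>
    { toFun := fun x => ψ x * DomMulAct.mk.symm a
      map_add' := fun x y => by
        show ψ (x + y) * DomMulAct.mk.symm a
          = ψ x * DomMulAct.mk.symm a + ψ y * DomMulAct.mk.symm a
        rw [map_add, add_mul]
      map_smul' := fun c x => by
        show ψ (c • x) * DomMulAct.mk.symm a = c • (ψ x * DomMulAct.mk.symm a)
        rw [map_smul, smul_eq_mul, smul_eq_mul, mul_assoc] }⟩
  have rsmul_apply : ∀ (a : A) (ψ : B →ₗ[A] A) (x : B),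
      (DomMulAct.mk a • ψ) x = ψ x * a := by
    intro a ψ x
    show ψ x * DomMulAct.mk.symm (DomMulAct.mk a) = ψ x * a
    rw [Equiv.symm_apply_apply]
  letI : MulAction Aᵈᵐᵃ (B →ₗ[A] A) :=
    { one_smul := fun ψ => LinearMap.ext fun x => by
        show ψ x * DomMulAct.mk.symm 1 = ψ x
        rw [DomMulAct.symm_mk_one, mul_one]
      mul_smul := fun a b ψ => LinearMap.ext fun x => by
        show ψ x * DomMulAct.mk.symm (a * b)
          = (b • ψ) x * DomMulAct.mk.symm a
        rw [DomMulAct.symm_mk_mul]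
        show ψ x * (DomMulAct.mk.symm b * DomMulAct.mk.symm a)
          = ψ x * DomMulAct.mk.symm b * DomMulAct.mk.symm a
        rw [mul_assoc] }
  letI : DistribMulAction Aᵈᵐᵃ (B →ₗ[A] A) :=
    { smul_zero := fun a => LinearMap.ext fun x => by
        show (0 : B →ₗ[A] A) x * DomMulAct.mk.symm a = (0 : B →ₗ[A] A) x
        rw [LinearMap.zero_apply, zero_mul]
      smul_add := fun a ψ ψ' => LinearMap.ext fun x => by
        show (ψ + ψ') x * DomMulAct.mk.symm a = (a • ψ) x + (a • ψ') x
        rw [LinearMap.add_apply, add_mul]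
        rfl }
  letI instPA : Module Aᵈᵐᵃ (B →ₗ[A] A) :=
    { add_smul := fun a b ψ => LinearMap.ext fun x => by
        show ψ x * DomMulAct.mk.symm (a + b) = (a • ψ) x + (b • ψ) x
        rw [show DomMulAct.mk.symm (a + b)
            = DomMulAct.mk.symm a + DomMulAct.mk.symm b from rfl, mul_add]
        rfl
      zero_smul := fun ψ => LinearMap.ext fun x => by
        show ψ x * DomMulAct.mk.symm (0 : Aᵈᵐᵃ) = (0 : B →ₗ[A] A) x
        rw [show DomMulAct.mk.symm (0 : Aᵈᵐᵃ) = (0 : A) from rfl, mul_zero,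
          LinearMap.zero_apply] }
  letI instComm : SMulCommClass Aᵈᵐᵃ B (B →ₗ[A] A) :=
    ⟨fun a b ψ => LinearMap.ext fun x => by
      obtain ⟨a', rfl⟩ : ∃ a', DomMulAct.mk a' = a :=
        ⟨DomMulAct.mk.symm a, Equiv.apply_symm_apply _ _⟩
      show (DomMulAct.mk a' • (b • ψ)) x = (b • (DomMulAct.mk a' • ψ)) x
      rw [rsmul_apply, hdual, hdual, rsmul_apply]⟩
  -- ### injectivity of the coinduced-type module
  have hinj' : Module.Injective Bᵈᵐᵃ ((B →ₗ[A] A) →ₗ[Aᵈᵐᵃ] (L →+ AddCircle (1 : ℚ))) :=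
    StmtAux.injective_hom hdualproj hL
  -- ### the pairing (ψ, l) ↦ (y ↦ ψ y • l)
  let pair : (B →ₗ[A] A) → L → (B →ₗ[A] L) := fun ψ l =>
    { toFun := fun y => ψ y • l
      map_add' := fun y y' => by
        show ψ (y + y') • l = ψ y • l + ψ y' • l
        rw [map_add, add_smul]
      map_smul' := fun a y => by
        show ψ (a • y) • l = a • (ψ y • l)
        rw [map_smul, smul_eq_mul, mul_smul] }
  have pair_apply : ∀ (ψ : B →ₗ[A] A) (l : L) (y : B), pair ψ l y = ψ y • l := fun _ _ _ => rfl
  -- ### the retraction maps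
  let ii : ((B →ₗ[A] L) →+ AddCircle (1 : ℚ))
      →ₗ[Bᵈᵐᵃ] ((B →ₗ[A] A) →ₗ[Aᵈᵐᵃ] (L →+ AddCircle (1 : ℚ))) :=
    { toFun := fun c =>
        { toFun := fun ψ =>
            { toFun := fun l => c (pair ψ l)
              map_zero' := by
                show c (pair ψ 0) = 0
                rw [show pair ψ 0 = 0 from LinearMap.ext fun y => by
                  rw [pair_apply, smul_zero, LinearMap.zero_apply], map_zero]
              map_add' := fun l l' => by
                show c (pair ψ (l + l')) = c (pair ψ l) + c (pair ψ l')
                rw [show pair ψ (l + l') = pair ψ l + pair ψ l' from LinearMap.ext fun y => by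
                  rw [pair_apply, LinearMap.add_apply, pair_apply, pair_apply, smul_add],
                  map_add] }
          map_add' := fun ψ ψ' => AddMonoidHom.ext fun l => by
            show c (pair (ψ + ψ') l) = c (pair ψ l) + c (pair ψ' l)
            rw [show pair (ψ + ψ') l = pair ψ l + pair ψ' l from LinearMap.ext fun y => by
              rw [pair_apply, LinearMap.add_apply, LinearMap.add_apply, pair_apply, pair_apply,
                add_smul], map_add]
          map_smul' := fun a ψ => AddMonoidHom.ext fun l => by
            obtain ⟨a', rfl⟩ : ∃ a', DomMulAct.mk a' = a :=
              ⟨DomMulAct.mk.symm a, Equiv.apply_symm_apply _ _⟩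
            show c (pair (DomMulAct.mk a' • ψ) l) = c (pair ψ (a' • l))
            congr 1
            exact LinearMap.ext fun y => by
              rw [pair_apply, pair_apply, rsmul_apply, mul_smul] }
      map_add' := fun c c' => LinearMap.ext fun ψ => AddMonoidHom.ext fun l => rfl
      map_smul' := fun bd c => LinearMap.ext fun ψ => AddMonoidHom.ext fun l => by
        obtain ⟨b, rfl⟩ : ∃ b, DomMulAct.mk b = bd :=
          ⟨DomMulAct.mk.symm bd, Equiv.apply_symm_apply _ _⟩
        show c (b • pair ψ l) = c (pair (b • ψ) l)
        congr 1
        exact LinearMap.ext fun y => by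
          rw [hdualL, pair_apply, pair_apply, hdual] }
  have key : ∀ (θ : (B →ₗ[A] A) →ₗ[Aᵈᵐᵃ] (L →+ AddCircle (1 : ℚ))) (b : B) (m : B →ₗ[A] L),
      ∑ i : ↥S, θ (b • φ i) (m (i : B)) = ∑ i : ↥S, θ (φ i) (m ((i : B) * b)) := by
    intro θ b m
    have hexp : ∀ i : ↥S, b • φ i
        = ∑ j : ↥S, DomMulAct.mk ((φ i) ((j : B) * b)) • φ j := by
      intro i
      apply LinearMap.ext
      intro x
      rw [hdual, LinearMap.sum_apply]
      conv_lhs => rw [← hdb x]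
      rw [Finset.sum_mul, map_sum]
      refine Finset.sum_congr rfl fun j _ => ?_
      rw [rsmul_apply, show φ j x • (j : B) * b = φ j x • ((j : B) * b) from by
        rw [hAB, hAB, mul_assoc], map_smul, smul_eq_mul]
    calc ∑ i : ↥S, θ (b • φ i) (m (i : B))
        = ∑ i : ↥S, ∑ j : ↥S, θ (φ j) ((φ i ((j : B) * b)) • m (i : B)) := by
          refine Finset.sum_congr rfl fun i _ => ?_
          rw [hexp i, map_sum, AddMonoidHom.finset_sum_apply]
          refine Finset.sum_congr rfl fun j _ => ?_
          rw [map_smul θ]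
          rfl
      _ = ∑ j : ↥S, θ (φ j) (m (∑ i : ↥S, (φ i ((j : B) * b)) • (i : B))) := by
          rw [Finset.sum_comm]
          refine Finset.sum_congr rfl fun j _ => ?_
          rw [map_sum m, map_sum (θ (φ j))]
          refine Finset.sum_congr rfl fun i _ => ?_
          rw [map_smul m]
      _ = ∑ j : ↥S, θ (φ j) (m ((j : B) * b)) := by
          refine Finset.sum_congr rfl fun j _ => ?_
          rw [hdb]
  let rr : ((B →ₗ[A] A) →ₗ[Aᵈᵐᵃ] (L →+ AddCircle (1 : ℚ)))
      →ₗ[Bᵈᵐᵃ] ((B →ₗ[A] L) →+ AddCircle (1 : ℚ)) :=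
    { toFun := fun θ =>
        { toFun := fun m => ∑ i : ↥S, θ (φ i) (m (i : B))
          map_zero' := by simp
          map_add' := fun m m' => by
            simp [LinearMap.add_apply, map_add, Finset.sum_add_distrib] }
      map_add' := fun θ θ' => AddMonoidHom.ext fun m => by
        show ∑ i : ↥S, (θ + θ') (φ i) (m (i : B)) = _
        simp [Finset.sum_add_distrib]
      map_smul' := fun bd θ => AddMonoidHom.ext fun m => by
        obtain ⟨b, rfl⟩ : ∃ b, DomMulAct.mk b = bd :=
          ⟨DomMulAct.mk.symm bd, Equiv.apply_symm_apply _ _⟩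
        show ∑ i : ↥S, (DomMulAct.mk b • θ) (φ i) (m (i : B))
          = ∑ i : ↥S, θ (φ i) ((DomMulAct.mk.symm (DomMulAct.mk b) • m) (i : B))
        rw [Equiv.symm_apply_apply]
        calc ∑ i : ↥S, (DomMulAct.mk b • θ) (φ i) (m (i : B))
            = ∑ i : ↥S, θ (b • φ i) (m (i : B)) := by
              refine Finset.sum_congr rfl fun i _ => ?_
              rw [DomMulAct.mk_smul_linearMap_apply]
          _ = ∑ i : ↥S, θ (φ i) (m ((i : B) * b)) := key θ b m
          _ = ∑ i : ↥S, θ (φ i) ((b • m) (i : B)) := by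
              refine Finset.sum_congr rfl fun i _ => ?_
              rw [show (b • m) (i : B) = m ((i : B) * b) from hdualL b m (i : B)] }
  have hri : ∀ c, rr (ii c) = c := by
    intro c
    apply AddMonoidHom.ext
    intro m
    show ∑ i : ↥S, c (pair (φ i) (m (i : B))) = c m
    rw [← map_sum c]
    congr 1
    apply LinearMap.ext
    intro y
    rw [LinearMap.sum_apply]
    have : ∀ i : ↥S, pair (φ i) (m (i : B)) y = m (φ i y • (i : B)) := by
      intro i
      rw [pair_apply, map_smul m]
    rw [Finset.sum_congr rfl fun i _ => this i, ← map_sum m, hdb]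
  exact StmtAux.injective_of_retract hinj' ii rr hri

/-- Let `A → B` be a ring homomorphism with `B` finitely generated projective as an `A`-module
and `Hom_A(B, A)` projective as a `B`-module. If `L` is a flat `A`-module, then `Hom_A(B, L)`
is a flat `B`-module, where the `B`-module structure is `(b • h) x = h (x * b)`. -/
theorem stmt3 (A B : Type) [Ring A] [Ring B] (f : A →+* B)
    [Module A B] (hAB : ∀ (a : A) (b : B), a • b = f a * b)
    (hfin : Module.Finite A B) (hproj : Module.Projective A B)
    [Module B (B →ₗ[A] A)]
    (hdual : ∀ (b : B) (h : B →ₗ[A] A) (x : B), (b • h) x = h (x * b))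
    (hdualproj : Module.Projective B (B →ₗ[A] A))
    (L : Type) [AddCommGroup L] [Module A L] (hL : IsFlat A L)
    [Module B (B →ₗ[A] L)]
    (hdualL : ∀ (b : B) (h : B →ₗ[A] L) (x : B), (b • h) x = h (x * b)) :
    IsFlat B (B →ₗ[A] L) := by
  exact stmt3' A B f hAB hfin hproj hdual hdualproj L hL hdualL
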